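/- Every graph on n vertices with at least ⌊n²/4⌋ + 1 edges contains at least ⌊n/2⌋ triangles. -/

import Mathlib

open Finset SimpleGraph

private lemma quarter_add (m : ℕ) : (m + 2) ^ 2 / 4 = m ^ 2 / 4 + (m + 1) := by
  have h : (m + 2) ^ 2 = m ^ 2 + (m + 1) * 4 := by ring
  rw [h, Nat.add_mul_div_right _ _ (by norm_num : (0:ℕ) < 4)]

private lemma choose_two_lower {g : ℕ} (hg : g ≤ 3) : g - 1 ≤ g.choose 2 := by
  interval_cases g <;> decide

instance comapDecidable {α β : Type*} (G : SimpleGraph β) [h : DecidableRel G.Adj]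
    (f : α → β) : DecidableRel (G.comap f).Adj := fun a b => h (f a) (f b)

/-- Removal of two adjacent vertices `x, y` from a graph on `Fin n`. -/
private lemma removal {n : ℕ} (G : SimpleGraph (Fin n)) [DecidableRel G.Adj]
    {x y : Fin n} (hadj : G.Adj x y) :
    ∃ f : Fin (n - 2) ↪ Fin n,
      G.edgeFinset.card ≤ (G.comap f).edgeFinset.card + (G.degree x + G.degree y - 1) ∧
      (G.CliqueFree 3 → (G.comap f).CliqueFree 3) ∧
      (∀ T ∈ G.cliqueFinset 3, x ∈ T →
        ((G.comap f).cliqueFinset 3).card + 1 ≤ (G.cliqueFinset 3).card) := by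
  classical
  have hxy : x ≠ y := hadj.ne
  set s : Finset (Fin n) := ({x, y} : Finset (Fin n))ᶜ with hs
  have hcard : s.card = n - 2 := by
    rw [hs, card_compl]
    simp [card_insert_of_notMem, hxy]
  let e : ↥s ≃ Fin (n - 2) := s.equivFinOfCardEq hcard
  let f : Fin (n - 2) ↪ Fin n :=
    ⟨fun i => (e.symm i : Fin n), fun i j h => e.symm.injective (Subtype.coe_injective h)⟩
  have hf_mem : ∀ i, (f i) ∈ s := fun i => (e.symm i).2
  have hfx : ∀ i, f i ≠ x := by
    intro i h
    have := hf_mem i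
    rw [h, hs] at this
    simp at this
  have hfy : ∀ i, f i ≠ y := by
    intro i h
    have := hf_mem i
    rw [h, hs] at this
    simp at this
  have hsurj : ∀ u : Fin n, u ≠ x → u ≠ y → ∃ i, f i = u := by
    intro u hux huy
    refine ⟨e ⟨u, ?_⟩, ?_⟩
    · rw [hs]; simp [hux, huy]
    · show ((e.symm (e ⟨u, _⟩) : ↥s) : Fin n) = u
      rw [Equiv.symm_apply_apply]
  refine ⟨f, ?_, ?_, ?_⟩
  · -- edge counting
    have hsplit := card_filter_add_card_filter_not
      (s := G.edgeFinset) (p := fun e => x ∈ e ∨ y ∈ e)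
    have htouch : (G.edgeFinset.filter (fun e => x ∈ e ∨ y ∈ e)).card
        ≤ G.degree x + G.degree y - 1 := by
      have hsub : G.edgeFinset.filter (fun e => x ∈ e ∨ y ∈ e)
          ⊆ G.incidenceFinset x ∪ G.incidenceFinset y := by
        intro e he
        rw [mem_filter, mem_edgeFinset] at he
        rw [mem_union, mem_incidenceFinset, mem_incidenceFinset]
        rcases he.2 with h | h
        · exact Or.inl ⟨he.1, h⟩
        · exact Or.inr ⟨he.1, h⟩
      have hmem : s(x, y) ∈ G.incidenceFinset x ∩ G.incidenceFinset y := by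
        rw [mem_inter, mem_incidenceFinset, mem_incidenceFinset]
        exact ⟨⟨hadj, Sym2.mem_mk_left x y⟩, ⟨hadj, Sym2.mem_mk_right x y⟩⟩
      have h1 := card_union_add_card_inter (G.incidenceFinset x) (G.incidenceFinset y)
      have h2 : 1 ≤ (G.incidenceFinset x ∩ G.incidenceFinset y).card :=
        card_pos.2 ⟨_, hmem⟩
      have h3 := card_le_card hsub
      rw [card_incidenceFinset_eq_degree, card_incidenceFinset_eq_degree] at h1
      omega
    have havoid : (G.edgeFinset.filter (fun e => ¬(x ∈ e ∨ y ∈ e))).card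
        ≤ (G.comap f).edgeFinset.card := by
      apply card_le_card_of_surjOn (Sym2.map f)
      intro e he
      simp only [coe_filter, Set.mem_setOf_eq, mem_edgeFinset] at he
      obtain ⟨hE, hno⟩ := he
      induction e with
      | _ u v =>
        push_neg at hno
        rw [Sym2.mem_iff, Sym2.mem_iff] at hno
        push_neg at hno
        obtain ⟨⟨hux, hvx⟩, huy, hvy⟩ := hno
        obtain ⟨a, ha⟩ := hsurj u hux.symm huy.symm
        obtain ⟨b, hb⟩ := hsurj v hvx.symm hvy.symm
        refine ⟨s(a, b), ?_, ?_⟩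
        · rw [mem_coe, mem_edgeFinset, mem_edgeSet, comap_adj, ha, hb]
          exact hE
        · rw [Sym2.map_pair_eq, ha, hb]
    omega
  · -- clique-free transfer
    intro hfree
    exact hfree.comap ⟨⟨f, fun h => h⟩, f.injective⟩
  · -- clique counting
    intro T hT hxT
    have hmap : ∀ t ∈ (G.comap f).cliqueFinset 3, t.map f ∈ (G.cliqueFinset 3).erase T := by
      intro t ht
      rw [mem_cliqueFinset_iff] at ht
      rw [mem_erase, mem_cliqueFinset_iff]
      constructor
      · intro hEq
        have : x ∈ t.map f := hEq ▸ hxT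
        rw [mem_map] at this
        obtain ⟨a, _, ha⟩ := this
        exact hfx a ha
      · constructor
        · intro u hu v hv huv
          rw [mem_coe, mem_map] at hu hv
          obtain ⟨a, ha, rfl⟩ := hu
          obtain ⟨b, hb, rfl⟩ := hv
          have hab : a ≠ b := fun h => huv (by rw [h])
          exact ht.1 (mem_coe.2 ha) (mem_coe.2 hb) hab
        · rw [card_map]; exact ht.2
    have hinj : Set.InjOn (fun t : Finset (Fin (n - 2)) => t.map f)
        ↑((G.comap f).cliqueFinset 3) := fun a _ b _ h => Finset.map_injective f h
    have h4 := card_le_card_of_injOn _ hmap hinj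
    rw [card_erase_of_mem hT] at h4
    have h6 : 1 ≤ (G.cliqueFinset 3).card := card_pos.2 ⟨T, hT⟩
    omega

/-- Mantel's theorem. -/
private lemma mantel : ∀ n : ℕ, ∀ (G : SimpleGraph (Fin n)) (_ : DecidableRel G.Adj),
    G.CliqueFree 3 → G.edgeFinset.card ≤ n ^ 2 / 4 := by
  intro n
  induction n using Nat.strong_induction_on with
  | _ n ih =>
    intro G instG hfree
    by_cases hne : G.edgeFinset.Nonempty
    · obtain ⟨e, he⟩ := hne
      have hedge : ∃ u v : Fin n, G.Adj u v := by
        induction e with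
        | _ u v => exact ⟨u, v, mem_edgeFinset.1 he⟩
      obtain ⟨u, v, huv⟩ := hedge
      have h2 : 2 ≤ n := by
        have : 1 < Fintype.card (Fin n) := Fintype.one_lt_card_iff.2 ⟨u, v, huv.ne⟩
        rwa [Fintype.card_fin] at this
      have hdeg : G.degree u + G.degree v ≤ n := by
        have hdisj : Disjoint (G.neighborFinset u) (G.neighborFinset v) := by
          rw [Finset.disjoint_left]
          intro w hwu hwv
          rw [mem_neighborFinset] at hwu hwv
          exact hfree {u, v, w} (is3Clique_triple_iff.2 ⟨huv, hwu, hwv⟩)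
        have hun := card_union_of_disjoint hdisj
        have hle : (G.neighborFinset u ∪ G.neighborFinset v).card ≤ n := by
          have := card_le_univ (G.neighborFinset u ∪ G.neighborFinset v)
          rwa [Fintype.card_fin] at this
        rw [hun] at hle
        rwa [card_neighborFinset_eq_degree, card_neighborFinset_eq_degree] at hle
      obtain ⟨f, hedgeb, hfreeb, _⟩ := removal G huv
      have hih := ih (n - 2) (by omega) (G.comap f) inferInstance (hfreeb hfree)
      have hq : n ^ 2 / 4 = (n - 2) ^ 2 / 4 + (n - 1) := by
        have hq' := quarter_add (n - 2)
        rw [Nat.sub_add_cancel h2] at hq'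
        omega
      omega
    · rw [not_nonempty_iff_eq_empty] at hne
      rw [hne]
      simp

private lemma rademacher_aux : ∀ n : ℕ, ∀ (G : SimpleGraph (Fin n)) (_ : DecidableRel G.Adj),
    n ^ 2 / 4 + 1 ≤ G.edgeFinset.card → n / 2 ≤ (G.cliqueFinset 3).card := by
  intro n
  induction n using Nat.strong_induction_on with
  | _ n ih =>
    intro G instG hm
    have hnotfree : ¬ G.CliqueFree 3 := by
      intro h
      have := mantel n G instG h
      omega
    rw [CliqueFree] at hnotfree
    push_neg at hnotfree
    obtain ⟨T0, hT0⟩ := hnotfree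
    obtain ⟨a, b, c, hab, hac, hbc, hT0eq⟩ := is3Clique_iff.1 hT0
    by_cases hcase : ∃ u v : Fin n, G.Adj u v ∧ (∃ w, G.Adj u w ∧ G.Adj v w) ∧
        G.degree u + G.degree v ≤ n
    · -- Case 1 : remove the two endpoints
      obtain ⟨u, v, huv, ⟨w, huw, hvw⟩, hsum⟩ := hcase
      have hTmem : ({u, v, w} : Finset (Fin n)) ∈ G.cliqueFinset 3 :=
        mem_cliqueFinset_iff.2 (is3Clique_triple_iff.2 ⟨huv, huw, hvw⟩)
      have h2 : 2 ≤ n := by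
        have : 1 < Fintype.card (Fin n) := Fintype.one_lt_card_iff.2 ⟨u, v, huv.ne⟩
        rwa [Fintype.card_fin] at this
      obtain ⟨f, hedgeb, _, hclq⟩ := removal G huv
      have hq : n ^ 2 / 4 = (n - 2) ^ 2 / 4 + (n - 1) := by
        have hq' := quarter_add (n - 2)
        rw [Nat.sub_add_cancel h2] at hq'
        omega
      have hm' : (n - 2) ^ 2 / 4 + 1 ≤ (G.comap f).edgeFinset.card := by omega
      have hih := ih (n - 2) (by omega) (G.comap f) inferInstance hm'
      have hcl := hclq _ hTmem (by simp)
      omega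
    · -- Case 2 : every edge in a triangle has degree sum ≥ n + 1
      push_neg at hcase
      have hda : n < G.degree a + G.degree b := hcase a b hab ⟨c, hac, hbc⟩
      have hdb : n < G.degree b + G.degree c := hcase b c hbc ⟨a, hab.symm, hac.symm⟩
      have hdc : n < G.degree a + G.degree c := hcase a c hac ⟨b, hab, hbc.symm⟩
      set T : Finset (Fin n) := {a, b, c} with hTdef
      have hTmem : T ∈ G.cliqueFinset 3 :=
        mem_cliqueFinset_iff.2 (hT0eq ▸ hT0)
      have hTclique : G.IsClique ↑T := (mem_cliqueFinset_iff.1 hTmem).1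
      have hTcard : T.card = 3 := (mem_cliqueFinset_iff.1 hTmem).2
      have hn3 : 3 ≤ n := by
        have := card_le_univ T
        rwa [Fintype.card_fin, hTcard] at this
      have hcompl : (univ \ T).card = n - 3 := by
        rw [card_sdiff_of_subset (subset_univ T), card_univ, Fintype.card_fin, hTcard]
      set g : Fin n → ℕ := fun w => (T.filter (fun v => G.Adj w v)).card with hgdef
      -- degrees of triangle vertices
      have hdegsplit : ∀ v ∈ T, G.degree v
          = ((univ \ T).filter (fun w => G.Adj v w)).card + 2 := by
        intro v hv
        have h1 : G.neighborFinset v = univ.filter (G.Adj v) := by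
          ext w; simp [mem_neighborFinset]
        have h2 : filter (G.Adj v) univ = filter (G.Adj v) (univ \ T) ∪ filter (G.Adj v) T := by
          rw [← filter_union, sdiff_union_of_subset (subset_univ T)]
        have h3 : (T.filter (G.Adj v)) = T.erase v := by
          ext u
          rw [mem_filter, mem_erase]
          constructor
          · exact fun h => ⟨h.2.ne', h.1⟩
          · intro h
            refine ⟨h.2, hTclique hv (mem_coe.2 h.2) (Ne.symm h.1)⟩
        have h4 : (T.erase v).card = 2 := by
          rw [card_erase_of_mem hv, hTcard]
        have h5 : Disjoint ((univ \ T).filter (G.Adj v)) (T.filter (G.Adj v)) :=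
          disjoint_filter_filter sdiff_disjoint
        rw [← card_neighborFinset_eq_degree, h1, h2,
          card_union_of_disjoint h5, h3, h4]
      -- double counting
      have hdc2 : ∑ v ∈ T, ((univ \ T).filter (fun w => G.Adj v w)).card
          = ∑ w ∈ univ \ T, g w := by
        simp_rw [hgdef, card_filter]
        rw [Finset.sum_comm]
        exact sum_congr rfl fun w _ => sum_congr rfl fun v _ =>
          if_congr (G.adj_comm v w) rfl rfl
      have hsumT : ∑ v ∈ T, G.degree v = (∑ w ∈ univ \ T, g w) + 6 := by
        rw [sum_congr rfl hdegsplit, sum_add_distrib, hdc2]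
        simp [hTcard]
      have hsumabc : ∑ v ∈ T, G.degree v = G.degree a + G.degree b + G.degree c := by
        rw [hTdef]
        rw [sum_insert (by simp [hab.ne, hac.ne]), sum_insert (by simp [hbc.ne]),
          sum_singleton]
        ring
      -- counting triangles via pairs
      have hgle : ∀ w, g w ≤ 3 := by
        intro w
        rw [hgdef]
        calc (T.filter (fun v => G.Adj w v)).card ≤ T.card := card_le_card (filter_subset _ _)
        _ = 3 := hTcard
      have hpairs : 1 + ∑ w ∈ univ \ T, (g w).choose 2 ≤ (G.cliqueFinset 3).card := by
        set D := (univ \ T).sigma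
          (fun w => (T.filter (fun v => G.Adj w v)).powersetCard 2) with hDdef
        have hcardD : D.card = ∑ w ∈ univ \ T, (g w).choose 2 := by
          rw [hDdef, card_sigma]
          exact sum_congr rfl fun w _ => by rw [card_powersetCard, hgdef]
        have hmapD : ∀ p ∈ D, (insert p.1 p.2 : Finset (Fin n)) ∈ (G.cliqueFinset 3).erase T := by
          rintro ⟨w, q⟩ hp
          rw [hDdef, mem_sigma] at hp
          obtain ⟨hw, hq⟩ := hp
          rw [mem_powersetCard] at hq
          obtain ⟨hqsub, hqcard⟩ := hq
          have hwT : w ∉ T := (mem_sdiff.1 hw).2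
          have hqT : q ⊆ T := hqsub.trans (filter_subset _ _)
          have hwq : w ∉ q := fun h => hwT (hqT h)
          rw [mem_erase, mem_cliqueFinset_iff]
          refine ⟨?_, ?_, ?_⟩
          · intro hEq
            exact hwT (hEq ▸ mem_insert_self w q)
          · intro u hu u' hu' hne
            rw [mem_coe, mem_insert] at hu hu'
            rcases hu with rfl | hu
            · rcases hu' with rfl | hu'
              · exact absurd rfl hne
              · exact (mem_filter.1 (hqsub hu')).2
            · rcases hu' with rfl | hu'
              · exact ((mem_filter.1 (hqsub hu)).2).symm
              · exact hTclique (mem_coe.2 (hqT hu)) (mem_coe.2 (hqT hu')) hne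
          · rw [card_insert_of_notMem hwq, hqcard]
        have hinjD : Set.InjOn (fun p : (_ : Fin n) × Finset (Fin n) => insert p.1 p.2) ↑D := by
          rintro ⟨w, q⟩ hp ⟨w', q'⟩ hp' hEq
          rw [mem_coe, hDdef, mem_sigma, mem_powersetCard] at hp hp'
          have hwT : w ∉ T := (mem_sdiff.1 hp.1).2
          have hw'T : w' ∉ T := (mem_sdiff.1 hp'.1).2
          have hqT : q ⊆ T := hp.2.1.trans (filter_subset _ _)
          have hq'T : q' ⊆ T := hp'.2.1.trans (filter_subset _ _)
          simp only at hEq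
          have hqq' : q = q' := by
            ext u
            constructor
            · intro hu
              have : u ∈ insert w' q' := hEq ▸ mem_insert_of_mem hu
              rcases mem_insert.1 this with rfl | h
              · exact absurd (hqT hu) hw'T
              · exact h
            · intro hu
              have : u ∈ insert w q := hEq ▸ mem_insert_of_mem hu
              rcases mem_insert.1 this with rfl | h
              · exact absurd (hq'T hu) hwT
              · exact h
          have hww' : w = w' := by
            have : w ∈ insert w' q' := hEq ▸ mem_insert_self w q
            rcases mem_insert.1 this with rfl | h
            · rfl
            · exact absurd (hq'T h) hwT
          simp [hww', hqq']
        have hcb := card_le_card_of_injOn _ hmapD hinjD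
        rw [card_erase_of_mem hTmem, hcardD] at hcb
        have h6 : 1 ≤ (G.cliqueFinset 3).card := card_pos.2 ⟨T, hTmem⟩
        omega
      have hsum2 : ∑ w ∈ univ \ T, g w ≤ (∑ w ∈ univ \ T, (g w).choose 2) + (n - 3) := by
        calc ∑ w ∈ univ \ T, g w ≤ ∑ w ∈ univ \ T, ((g w).choose 2 + 1) := by
              apply sum_le_sum
              intro w _
              have := choose_two_lower (hgle w)
              omega
        _ = (∑ w ∈ univ \ T, (g w).choose 2) + (n - 3) := by
              rw [sum_add_distrib, sum_const, hcompl, smul_eq_mul, mul_one]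
      omega

set_option maxHeartbeats 1000000 in
/-- Rademacher's theorem: every graph on `n` vertices with at least `⌊n²/4⌋ + 1` edges
contains at least `⌊n/2⌋` triangles. -/
theorem rademacher (n : ℕ) (G : SimpleGraph (Fin n)) [DecidableRel G.Adj]
    (h : n ^ 2 / 4 + 1 ≤ G.edgeFinset.card) :
    n / 2 ≤ (G.cliqueFinset 3).card := by
  have := rademacher_aux n G (by infer_instance)
  exact this h
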